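/- For binary words of length n and any l, the composition πsr^l of the letter-flip π with the reflection sr^l fixes no word when n is odd; when n is even, πsr^l fixes a word only if l is even, in which case it fixes exactly 2^{n/2} words. Consequently the total number of (word, operation) fixed pairs over all n operations of the form πsr^l is (n/2)·2^{n/2} for n even and 0 for n odd. -/

import Mathlib

open Finset
open Fin.NatCast

private lemma card_even_range (m : ℕ) :
    ((Finset.range (2 * m)).filter (fun l => Even l)).card = m := by
  induction m with
  | zero => simp
  | succ k ih =>
    have h2 : 2 * (k + 1) = (2 * k + 1) + 1 := by ring
    rw [h2, Finset.range_add_one, Finset.filter_insert, Finset.range_add_one, Finset.filter_insert,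
      if_neg (by simp [Nat.even_add_one]), if_pos (even_two_mul k),
      Finset.card_insert_of_notMem (by simp), ih]

open Fin.CommRing in
private lemma fin_fixed_of_odd {n : ℕ} [NeZero n] (hn : ¬ Even n) (l : Fin n) :
    ∃ i : Fin n, -(i + l + 1) = i := by
  obtain ⟨m, hm⟩ := Nat.not_even_iff_odd.mp hn
  refine ⟨((m : Fin n) + 1) * (-(l + 1)), ?_⟩
  have h1 : (2 : Fin n) * ((m : Fin n) + 1) = 1 := by
    have : ((2 * (m + 1) : ℕ) : Fin n) = ((n + 1 : ℕ) : Fin n) := by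
      congr 1
      omega
    push_cast at this
    rw [Fin.natCast_self, zero_add] at this
    linear_combination this
  set i := ((m : Fin n) + 1) * (-(l + 1)) with hi
  have h2 : (2 : Fin n) * i = -(l + 1) := by
    rw [hi, ← mul_assoc, h1, one_mul]
  linear_combination -h2

open Fin.CommRing in
private lemma fin_fixed_of_odd_l {n : ℕ} [NeZero n] (l : Fin n) (hl : Odd l.val) :
    ∃ i : Fin n, -(i + l + 1) = i := by
  obtain ⟨m, hm⟩ := hl
  refine ⟨-((m : Fin n) + 1), ?_⟩
  have h2 : (2 : Fin n) * (-((m : Fin n) + 1)) = -(l + 1) := by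
    have : ((2 * (m + 1) : ℕ) : Fin n) = ((l.val + 1 : ℕ) : Fin n) := by
      congr 1
      omega
    push_cast [Fin.cast_val_eq_self] at this
    linear_combination -this
  linear_combination -h2

open Fin.CommRing in
private lemma fin_no_fixed {n : ℕ} [NeZero n] (hn : Even n) (l : Fin n) (hl : Even l.val) :
    ∀ j : Fin n, -(j + l + 1) ≠ j := by
  intro j hj
  have h0 : ((j.val + j.val + l.val + 1 : ℕ) : Fin n) = 0 := by
    push_cast [Fin.cast_val_eq_self]
    linear_combination -hj
  have hval : (j.val + j.val + l.val + 1) % n = 0 := by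
    have := congrArg Fin.val h0
    rwa [Fin.val_natCast, Fin.val_zero] at this
  have hdvd : 2 ∣ (j.val + j.val + l.val + 1) := by
    refine dvd_trans ?_ (Nat.dvd_of_mod_eq_zero hval)
    obtain ⟨a, ha⟩ := hn
    exact ⟨a, by omega⟩
  obtain ⟨b, hb⟩ := hl
  omega

private lemma flip_card_zero {n : ℕ} [NeZero n] (l : Fin n) (i : Fin n)
    (hi : -(i + l + 1) = i) :
    Nat.card {w : Fin n → Fin 2 // ∀ j : Fin n, w j = 1 - w (-(j + l + 1))} = 0 := by
  have : IsEmpty {w : Fin n → Fin 2 // ∀ j : Fin n, w j = 1 - w (-(j + l + 1))} := by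
    constructor
    rintro ⟨w, hw⟩
    have h := hw i
    rw [hi] at h
    have : ∀ a : Fin 2, a ≠ 1 - a := by decide
    exact this _ h
  exact Nat.card_of_isEmpty

open Fin.CommRing in
private lemma flip_card_pow {n : ℕ} [NeZero n] (l : Fin n)
    (hfix : ∀ j : Fin n, -(j + l + 1) ≠ j) :
    Nat.card {w : Fin n → Fin 2 // ∀ i : Fin n, w i = 1 - w (-(i + l + 1))} = 2 ^ (n / 2) := by
  classical
  let r : Fin n → Fin n := fun j => -(j + l + 1)
  have hrr : ∀ j, r (r j) = j := by
    intro j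
    show -(-(j + l + 1) + l + 1) = j
    ring
  let s : Setoid (Fin n) :=
    ⟨fun a b => b = a ∨ b = r a, by
      refine ⟨fun a => Or.inl rfl, ?_, ?_⟩
      · intro a b h
        rcases h with h | h
        · exact Or.inl h.symm
        · right; rw [h, hrr]
      · intro a b c hab hbc
        rcases hab with h | h <;> rcases hbc with h2 | h2 <;> subst h <;> subst h2
        · exact Or.inl rfl
        · exact Or.inr rfl
        · exact Or.inr rfl
        · exact Or.inl (hrr a)⟩
  have flip2 : ∀ a b : Fin 2, a = 1 - b → b = 1 - a := by decide
  have dflip : ∀ a : Fin 2, 1 - (1 - a) = a := by decide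
  let F : {w : Fin n → Fin 2 // ∀ i : Fin n, w i = 1 - w (-(i + l + 1))} →
      (Quotient s → Fin 2) := fun w q => w.1 q.out
  have hinj : Function.Injective F := by
    rintro ⟨w1, h1⟩ ⟨w2, h2⟩ h
    apply Subtype.ext
    funext j
    have hq : w1 (Quotient.mk s j).out = w2 (Quotient.mk s j).out := congrFun h (Quotient.mk s j)
    obtain h' | h' : j = (Quotient.mk s j).out ∨ j = r (Quotient.mk s j).out :=
      @Quotient.mk_out _ s j
    · rw [h']; exact hq
    · have e1 : w1 (r (Quotient.mk s j).out) = 1 - w1 (Quotient.mk s j).out :=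
        flip2 _ _ (h1 (Quotient.mk s j).out)
      have e2 : w2 (r (Quotient.mk s j).out) = 1 - w2 (Quotient.mk s j).out :=
        flip2 _ _ (h2 (Quotient.mk s j).out)
      show w1 j = w2 j
      rw [h', e1, e2, hq]
  have hsurj : Function.Surjective F := by
    intro f
    refine ⟨⟨fun j => if j = (Quotient.mk s j).out then f (Quotient.mk s j)
      else 1 - f (Quotient.mk s j), ?_⟩, ?_⟩
    · intro i
      have hq : Quotient.mk s (-(i + l + 1)) = Quotient.mk s i :=
        Quotient.sound (Or.inr (hrr i).symm)
      show (if i = (Quotient.mk s i).out then f (Quotient.mk s i) else 1 - f (Quotient.mk s i)) =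
        1 - (if -(i + l + 1) = (Quotient.mk s (-(i + l + 1))).out
          then f (Quotient.mk s (-(i + l + 1))) else 1 - f (Quotient.mk s (-(i + l + 1))))
      rw [hq]
      set o := (Quotient.mk s i).out with ho
      obtain h' | h' : i = o ∨ i = r o := @Quotient.mk_out _ s i
      · rw [if_pos h', if_neg (fun hh => hfix i (hh.trans h'.symm)), dflip]
      · have hro : -(i + l + 1) = o := by
          have h2 : r i = r (r o) := congrArg r h'
          rw [hrr] at h2
          exact h2
        rw [if_neg (fun hh => hfix o (h'.symm.trans hh)), if_pos hro]
    · funext q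
      have ho : Quotient.mk s q.out = q := Quotient.out_eq q
      show (if q.out = (Quotient.mk s q.out).out then f (Quotient.mk s q.out)
        else 1 - f (Quotient.mk s q.out)) = f q
      rw [ho, if_pos rfl]
  have hcard : Fintype.card (Quotient s) = n / 2 := by
    have key : (Finset.univ : Finset (Fin n)).card =
        ∑ q : Quotient s, (Finset.univ.filter (fun j => Quotient.mk s j = q)).card :=
      Finset.card_eq_sum_card_fiberwise (fun x _ => Finset.mem_univ _)
    have fib : ∀ q : Quotient s,
        (Finset.univ.filter (fun j => Quotient.mk s j = q)).card = 2 := by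
      intro q
      have hset : Finset.univ.filter (fun j => Quotient.mk s j = q) = {q.out, r q.out} := by
        ext j
        simp only [Finset.mem_filter, Finset.mem_univ, true_and, Finset.mem_insert,
          Finset.mem_singleton]
        constructor
        · intro hj
          have : Quotient.mk s j = Quotient.mk s q.out := by rw [hj, Quotient.out_eq]
          obtain h' | h' : q.out = j ∨ q.out = r j := Quotient.exact this
          · exact Or.inl h'.symm
          · right
            rw [h', hrr]
        · rintro (rfl | rfl)
          · exact Quotient.out_eq q
          · rw [show Quotient.mk s (r q.out) = Quotient.mk s q.out from
              Quotient.sound (Or.inr (hrr q.out).symm), Quotient.out_eq]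
      rw [hset]
      exact Finset.card_pair (fun hh => hfix q.out hh.symm)
    rw [Finset.card_univ, Fintype.card_fin] at key
    simp only [fib, Finset.sum_const, Finset.card_univ, smul_eq_mul] at key
    omega
  have := Nat.card_congr (Equiv.ofBijective F ⟨hinj, hsurj⟩)
  rw [this, Nat.card_eq_fintype_card, Fintype.card_fun, Fintype.card_fin, hcard]

theorem flip_reflection_fixed_words_binary (n : ℕ) [NeZero n] :
    (∀ l : Fin n, ¬ Even n →
      Nat.card {w : Fin n → Fin 2 // ∀ i : Fin n, w i = 1 - w (-(i + l + 1))} = 0) ∧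
    (∀ l : Fin n, Even n → Odd l.val →
      Nat.card {w : Fin n → Fin 2 // ∀ i : Fin n, w i = 1 - w (-(i + l + 1))} = 0) ∧
    (∀ l : Fin n, Even n → Even l.val →
      Nat.card {w : Fin n → Fin 2 // ∀ i : Fin n, w i = 1 - w (-(i + l + 1))} =
        2 ^ (n / 2)) ∧
    (Even n →
      ∑ l ∈ Finset.range n,
          Nat.card {w : Fin n → Fin 2 // ∀ i : Fin n,
            w i = 1 - w (-(i + (l : Fin n) + 1))}
        = (n / 2) * 2 ^ (n / 2)) ∧
    (¬ Even n →
      ∑ l ∈ Finset.range n,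
          Nat.card {w : Fin n → Fin 2 // ∀ i : Fin n,
            w i = 1 - w (-(i + (l : Fin n) + 1))}
        = 0) := by
  have part1 : ∀ l : Fin n, ¬ Even n →
      Nat.card {w : Fin n → Fin 2 // ∀ i : Fin n, w i = 1 - w (-(i + l + 1))} = 0 := by
    intro l hn
    obtain ⟨i, hi⟩ := fin_fixed_of_odd hn l
    exact flip_card_zero l i hi
  have part2 : ∀ l : Fin n, Even n → Odd l.val →
      Nat.card {w : Fin n → Fin 2 // ∀ i : Fin n, w i = 1 - w (-(i + l + 1))} = 0 := by
    intro l _ hl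
    obtain ⟨i, hi⟩ := fin_fixed_of_odd_l l hl
    exact flip_card_zero l i hi
  have part3 : ∀ l : Fin n, Even n → Even l.val →
      Nat.card {w : Fin n → Fin 2 // ∀ i : Fin n, w i = 1 - w (-(i + l + 1))} =
        2 ^ (n / 2) := by
    intro l hn hl
    exact flip_card_pow l (fin_no_fixed hn l hl)
  refine ⟨part1, part2, part3, ?_, ?_⟩
  · intro hn
    have hterm : ∀ l ∈ Finset.range n,
        Nat.card {w : Fin n → Fin 2 // ∀ i : Fin n,
          w i = 1 - w (-(i + (l : Fin n) + 1))} = if Even l then 2 ^ (n / 2) else 0 := by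
      intro l hl
      rw [Finset.mem_range] at hl
      have hv : ((l : Fin n)).val = l := by rw [Fin.val_natCast, Nat.mod_eq_of_lt hl]
      by_cases he : Even l
      · rw [if_pos he]
        exact part3 _ hn (by rw [hv]; exact he)
      · rw [if_neg he]
        exact part2 _ hn (by rw [hv]; exact Nat.not_even_iff_odd.mp he)
    rw [Finset.sum_congr rfl hterm, ← Finset.sum_filter, Finset.sum_const, smul_eq_mul]
    congr 1
    obtain ⟨a, ha⟩ := hn
    have h2 : n = 2 * a := by omega
    rw [h2, card_even_range]
    omega
  · intro hn
    refine Finset.sum_eq_zero ?_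
    intro l _
    exact part1 _ hn
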